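/- There is an open set of integrals of motion for which the set U is empty, i.e., the dynamics is alternating. Precisely: let 0 < R < 1, E > 0, and F ∈ ℝ with F > (2/R² − 1)E. Then for all x, y, z, w ∈ ℝ satisfying x² + y² + z² = E and x²/R² + y² + z² + w² = F, one has z² < (R²/(1−R²)) w². -/

import Mathlib

/-- There is an open set of integrals of motion (`F > (2/R² − 1) E`) for which
the set `U` is empty, i.e. the dynamics is alternating. -/
theorem alternating_case_open_set (R E F : ℝ) (hR0 : 0 < R) (hR1 : R < 1)
    (hE : 0 < E) (hF : (2 / R ^ 2 - 1) * E < F) :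
    ∀ x y z w : ℝ, x ^ 2 + y ^ 2 + z ^ 2 = E →
      x ^ 2 / R ^ 2 + y ^ 2 + z ^ 2 + w ^ 2 = F →
      z ^ 2 < (R ^ 2 / (1 - R ^ 2)) * w ^ 2 := by
  intro x y z w h1 h2
  have hR2 : (0:ℝ) < R ^ 2 := by positivity
  have h1R2 : (0:ℝ) < 1 - R ^ 2 := by nlinarith
  have hF' : (2 - R ^ 2) * E < R ^ 2 * F := by
    have h := mul_lt_mul_of_pos_right hF hR2
    have hq : (2 / R ^ 2 - 1) * E * R ^ 2 = (2 - R ^ 2) * E := by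
      field_simp
    nlinarith [h, hq]
  -- key: R² w² − (1−R²) z² > 0
  have hx : x ^ 2 / R ^ 2 * R ^ 2 = x ^ 2 := by field_simp
  have key : (1 - R ^ 2) * z ^ 2 < R ^ 2 * w ^ 2 := by
    have hw : R ^ 2 * w ^ 2 = R ^ 2 * F - R ^ 2 * E - x ^ 2 * (1 - R ^ 2) := by
      have := congrArg (· * R ^ 2) h2
      nlinarith [hx]
    nlinarith [sq_nonneg x, sq_nonneg y, sq_nonneg z]
  rw [div_mul_eq_mul_div, lt_div_iff₀ h1R2]
  linarith [key]
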